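/- Let X be an infinite, locally finite, connected simple graph with a graph height function (h,Γ) such that Γ acts transitively on X, and let d = d(h,Γ). Then for all n ≥ 0: h_n ≤ P_D(dn) · Σ_{m=0}^{n} b_m · b̄_{n−m}. -/

import Mathlib

open Filter Finset

noncomputable section

variable {V : Type*}

/-- `w : ℕ → V` represents a walk of length `n` from `v`: consecutive vertices are
adjacent and the values are pinned to `w n` from index `n` on. -/
noncomputable def IsWalkFrom (G : SimpleGraph V) (n : ℕ) (v : V) (w : ℕ → V) : Prop :=
  w 0 = v ∧ (∀ i < n, G.Adj (w i) (w (i + 1))) ∧ (∀ i, n ≤ i → w i = w n)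

/-- A self-avoiding walk of length `n` starting at `v`. -/
noncomputable def IsSAWFrom (G : SimpleGraph V) (n : ℕ) (v : V) (w : ℕ → V) : Prop :=
  IsWalkFrom G n v w ∧ Set.InjOn w (Set.Iic n)

/-- A bridge with respect to the height function `h`. -/
noncomputable def IsBridgeFrom (G : SimpleGraph V) (h : V → ℤ) (n : ℕ) (v : V) (w : ℕ → V) : Prop :=
  IsSAWFrom G n v w ∧ ∀ i, 1 ≤ i → i ≤ n → h (w 0) < h (w i) ∧ h (w i) ≤ h (w n)

/-- A reversed bridge with respect to the height function `h`. -/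
noncomputable def IsRBridgeFrom (G : SimpleGraph V) (h : V → ℤ) (n : ℕ) (v : V) (w : ℕ → V) : Prop :=
  IsSAWFrom G n v w ∧ ∀ i, 1 ≤ i → i ≤ n → h (w 0) > h (w i) ∧ h (w i) ≥ h (w n)

/-- A half-space walk with respect to the height function `h`. -/
noncomputable def IsHSWFrom (G : SimpleGraph V) (h : V → ℤ) (n : ℕ) (v : V) (w : ℕ → V) : Prop :=
  IsSAWFrom G n v w ∧ ∀ i, 1 ≤ i → i ≤ n → h (w 0) < h (w i)

/-- The span of (the first `n+1` vertices of) a walk. -/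
noncomputable def walkSpan (h : V → ℤ) (n : ℕ) (w : ℕ → V) : ℤ :=
  ((Finset.range (n + 1)).sup' ⟨0, by simp⟩ fun i => h (w i)) -
    ((Finset.range (n + 1)).inf' ⟨0, by simp⟩ fun i => h (w i))

/-- Number of SAWs of length `n` starting at `v`. -/
noncomputable def sawCount (G : SimpleGraph V) (n : ℕ) (v : V) : ℕ :=
  Nat.card {w : ℕ → V // IsSAWFrom G n v w}

/-- Number of bridges of length `n` starting at `v`. -/
noncomputable def bridgeCount (G : SimpleGraph V) (h : V → ℤ) (n : ℕ) (v : V) : ℕ :=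
  Nat.card {w : ℕ → V // IsBridgeFrom G h n v w}

/-- Number of reversed bridges of length `n` starting at `v`. -/
noncomputable def rbridgeCount (G : SimpleGraph V) (h : V → ℤ) (n : ℕ) (v : V) : ℕ :=
  Nat.card {w : ℕ → V // IsRBridgeFrom G h n v w}

/-- Number of half-space walks of length `n` starting at `v`. -/
noncomputable def hswCount (G : SimpleGraph V) (h : V → ℤ) (n : ℕ) (v : V) : ℕ :=
  Nat.card {w : ℕ → V // IsHSWFrom G h n v w}

/-- Number of bridges of length `n` and span `a` starting at `v`. -/
noncomputable def bridgeSpanCount (G : SimpleGraph V) (h : V → ℤ) (n : ℕ) (v : V) (a : ℤ) : ℕ :=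
  Nat.card {w : ℕ → V // IsBridgeFrom G h n v w ∧ walkSpan h n w = a}

/-- Number of reversed bridges of length `n` and span `a` starting at `v`. -/
noncomputable def rbridgeSpanCount (G : SimpleGraph V) (h : V → ℤ) (n : ℕ) (v : V) (a : ℤ) : ℕ :=
  Nat.card {w : ℕ → V // IsRBridgeFrom G h n v w ∧ walkSpan h n w = a}

/-- `c_n`: maximal number of SAWs of length `n` over all starting vertices. -/
noncomputable def sawSup (G : SimpleGraph V) (n : ℕ) : ℕ :=
  sSup {m | ∃ v : V, m = sawCount G n v}

/-- `b_n`: minimal number of bridges of length `n` over all starting vertices. -/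
noncomputable def bridgeInf (G : SimpleGraph V) (h : V → ℤ) (n : ℕ) : ℕ :=
  sInf {m | ∃ v : V, m = bridgeCount G h n v}

/-- `b̄_n`: minimal number of reversed bridges of length `n` over all starting vertices. -/
noncomputable def rbridgeInf (G : SimpleGraph V) (h : V → ℤ) (n : ℕ) : ℕ :=
  sInf {m | ∃ v : V, m = rbridgeCount G h n v}

/-- `idx` together with the spans `a` form the canonical decomposition of the walk `w`
of length `n` into an alternating sequence of `k` bridges and reversed bridges. -/
noncomputable def IsCanonicalDecomp (h : V → ℤ) (n : ℕ) (w : ℕ → V) (k : ℕ) (a : ℕ → ℤ)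
    (idx : ℕ → ℕ) : Prop :=
  idx 0 = 0 ∧ idx k = n ∧
  ∀ j, 1 ≤ j → j ≤ k →
    idx (j - 1) < idx j ∧ idx j ≤ n ∧
    a j = |h (w (idx j)) - h (w (idx (j - 1)))| ∧
    (∀ i, idx (j - 1) ≤ i → i ≤ n → |h (w i) - h (w (idx (j - 1)))| ≤ a j) ∧
    (∀ i, idx j < i → i ≤ n → |h (w i) - h (w (idx (j - 1)))| < a j)

/-- `h_{n,v}(a_1,…,a_k)`: number of half-space walks of length `n` from `v` whose
canonical decomposition has span sequence `a 1, …, a k`. -/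
noncomputable def hswSeqCount (G : SimpleGraph V) (h : V → ℤ) (n : ℕ) (v : V) (k : ℕ)
    (a : ℕ → ℤ) : ℕ :=
  Nat.card {w : ℕ → V // IsHSWFrom G h n v w ∧ ∃ idx : ℕ → ℕ,
    IsCanonicalDecomp h n w k a idx}

/-- The group `Γ` acts quasi-transitively. -/
noncomputable def QuasiTransitiveSub (G : SimpleGraph V) (Γ : Subgroup (G ≃g G)) : Prop :=
  ∃ S : Finset V, ∀ v : V, ∃ γ ∈ Γ, ∃ s ∈ S, γ s = v

/-- The graph `G` is quasi-transitive. -/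
noncomputable def QuasiTransitive (G : SimpleGraph V) : Prop :=
  ∃ S : Finset V, ∀ v : V, ∃ γ : G ≃g G, ∃ s ∈ S, γ s = v

/-- `(h, Γ)` is a graph height function on `G`. -/
noncomputable def IsGraphHeightFunction (G : SimpleGraph V) (h : V → ℤ) (Γ : Subgroup (G ≃g G)) : Prop :=
  QuasiTransitiveSub G Γ ∧
  (∀ γ ∈ Γ, ∀ u v : V, h (γ v) - h (γ u) = h v - h u) ∧
  (∀ v : V, ∃ u w : V, G.Adj v u ∧ G.Adj v w ∧ h u < h v ∧ h v < h w)

/-- `P_D A`: number of partitions of `A` into distinct parts. -/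
noncomputable def distinctPartitionCount (A : ℕ) : ℕ := (Nat.Partition.distincts A).card

noncomputable def bridgeBeta (G : SimpleGraph V) (h : V → ℤ) : ℝ :=
  Filter.limsup (fun n : ℕ => (bridgeInf G h n : ℝ) ^ (1 / (n : ℝ))) atTop

noncomputable def rbridgeBeta (G : SimpleGraph V) (h : V → ℤ) : ℝ :=
  Filter.limsup (fun n : ℕ => (rbridgeInf G h n : ℝ) ^ (1 / (n : ℝ))) atTop

noncomputable def betaMax (G : SimpleGraph V) (h : V → ℤ) : ℝ :=
  max (bridgeBeta G h) (rbridgeBeta G h)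

namespace HW

variable (G : SimpleGraph V)

def pin (n : ℕ) (w : ℕ → V) : ℕ → V := fun i => w (min i n)

def shift (t : ℕ) (w : ℕ → V) : ℕ → V := fun i => w (t + i)

def wconcat (m : ℕ) (w1 w2 : ℕ → V) : ℕ → V := fun i => if i ≤ m then w1 i else w2 (i - m)

noncomputable def firstCut (g : V → ℤ) (n : ℕ) (w : ℕ → V) : ℕ :=
  Nat.findGreatest (fun i => ∀ j ≤ n, g (w j) ≤ g (w i)) n

noncomputable def decompL : (g : V → ℤ) → (n : ℕ) → (w : ℕ → V) → List (ℕ × (ℕ → V))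
  | _, 0, _ => []
  | g, (n+1), w =>
    (max 1 (firstCut g (n+1) w), pin (max 1 (firstCut g (n+1) w)) w) ::
      decompL (-g) (n + 1 - max 1 (firstCut g (n+1) w))
        (shift (max 1 (firstCut g (n+1) w)) w)
  termination_by g n w => n
  decreasing_by omega

def Glue : (n : ℕ) → (w : ℕ → V) → List (ℕ × (ℕ → V)) → Prop
  | n, _, [] => n = 0
  | n, w, (m, ω) :: L => 1 ≤ m ∧ m ≤ n ∧ ω = pin m w ∧ Glue (n - m) (shift m w) L

def AltBridge : (g : V → ℤ) → List (ℕ × (ℕ → V)) → Prop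
  | _, [] => True
  | g, (m, ω) :: L => IsBridgeFrom G g m (ω 0) ω ∧ AltBridge (-g) L

def spansL : (g : V → ℤ) → List (ℕ × (ℕ → V)) → List ℤ
  | _, [] => []
  | g, (m, ω) :: L => (g (ω m) - g (ω 0)) :: spansL (-g) L

def lens : List (ℕ × (ℕ → V)) → ℕ × ℕ
  | [] => (0, 0)
  | (m, _) :: L => (m + (lens L).2, (lens L).1)

def spans2 : (g : V → ℤ) → List (ℕ × (ℕ → V)) → ℤ × ℤ
  | _, [] => (0, 0)
  | g, (m, ω) :: L => ((g (ω m) - g (ω 0)) + (spans2 (-g) L).2, (spans2 (-g) L).1)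

def stack2 (T : V → V → V → V) : (zO : V) → (zE : V) → List (ℕ × (ℕ → V)) → (ℕ → V) × (ℕ → V)
  | zO, zE, [] => (fun _ => zO, fun _ => zE)
  | zO, zE, (m, ω) :: L =>
    (wconcat m (fun i => T (ω 0) zO (ω i))
      (stack2 T zE (T (ω 0) zO (ω m)) L).2, (stack2 T zE (T (ω 0) zO (ω m)) L).1)

end HW

section BBB
variable {V : Type*} {G : SimpleGraph V}

namespace HW

lemma pin_eq_of_le {w : ℕ → V} {m i : ℕ} (h : i ≤ m) : pin m w i = w i := by
  simp [pin, Nat.min_eq_left h]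

lemma pin_eq_self {n : ℕ} {u : V} {w : ℕ → V} (hw : IsWalkFrom G n u w) : pin n w = w := by
  funext i
  rcases le_or_gt i n with hi | hi
  · exact pin_eq_of_le hi
  · simp only [pin]
    rw [Nat.min_eq_right hi.le, hw.2.2 i hi.le]

lemma shift_walk {n : ℕ} {u : V} {w : ℕ → V} (hw : IsWalkFrom G n u w) {m : ℕ} (hm : m ≤ n) :
    IsWalkFrom G (n - m) (w m) (shift m w) := by
  refine ⟨rfl, fun i hi => ?_, fun i hi => ?_⟩
  · have h2 := hw.2.1 (m + i) (by omega)
    have : m + (i + 1) = m + i + 1 := by omega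
    simpa [shift, this] using h2
  · show w (m + i) = w (m + (n - m))
    rw [hw.2.2 (m + i) (by omega), hw.2.2 (m + (n - m)) (by omega)]

lemma pin_walk {n : ℕ} {u : V} {w : ℕ → V} (hw : IsWalkFrom G n u w) {m : ℕ} (hm : m ≤ n) :
    IsWalkFrom G m u (pin m w) := by
  refine ⟨?_, fun i hi => ?_, fun i hi => ?_⟩
  · rw [pin_eq_of_le (Nat.zero_le m)]; exact hw.1
  · rw [pin_eq_of_le hi.le, pin_eq_of_le hi]
    exact hw.2.1 i (by omega)
  · rw [pin_eq_of_le (le_refl m)]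
    simp [pin, Nat.min_eq_right hi]

lemma shift_saw {n : ℕ} {u : V} {w : ℕ → V} (hw : IsSAWFrom G n u w) {m : ℕ} (hm : m ≤ n) :
    IsSAWFrom G (n - m) (w m) (shift m w) := by
  refine ⟨shift_walk hw.1 hm, fun i hi j hj hij => ?_⟩
  simp only [Set.mem_Iic] at hi hj
  simp only [shift] at hij
  have := hw.2 (show m + i ∈ Set.Iic n from by simp; omega)
    (show m + j ∈ Set.Iic n from by simp; omega) hij
  omega

lemma pin_saw {n : ℕ} {u : V} {w : ℕ → V} (hw : IsSAWFrom G n u w) {m : ℕ} (hm : m ≤ n) :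
    IsSAWFrom G m u (pin m w) := by
  refine ⟨pin_walk hw.1 hm, fun i hi j hj hij => ?_⟩
  simp only [Set.mem_Iic] at hi hj
  rw [pin_eq_of_le hi, pin_eq_of_le hj] at hij
  exact hw.2 (by simpa using by omega : i ∈ Set.Iic n) (by simpa using by omega : j ∈ Set.Iic n) hij

lemma firstCut_le (g : V → ℤ) (n : ℕ) (w : ℕ → V) : firstCut g n w ≤ n :=
  Nat.findGreatest_le n

lemma firstCut_spec (g : V → ℤ) (n : ℕ) (w : ℕ → V) :
    ∀ j ≤ n, g (w j) ≤ g (w (firstCut g n w)) := by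
  obtain ⟨b, hb, hbmax⟩ := Finset.exists_max_image (Finset.range (n + 1)) (fun i => g (w i))
    ⟨0, by simp⟩
  have hP : ∀ j ≤ n, g (w j) ≤ g (w b) := fun j hj => hbmax j (by simp; omega)
  simp only [Finset.mem_range] at hb
  exact Nat.findGreatest_spec (P := fun i => ∀ j ≤ n, g (w j) ≤ g (w i)) (m := b) (n := n) (by omega) hP

lemma firstCut_last (g : V → ℤ) (n : ℕ) (w : ℕ → V) :
    ∀ j ≤ n, firstCut g n w < j → g (w j) < g (w (firstCut g n w)) := by
  intro j hj hlt
  have hnP : ¬ (∀ j' ≤ n, g (w j') ≤ g (w j)) :=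
    Nat.findGreatest_is_greatest (P := fun i => ∀ j ≤ n, g (w j) ≤ g (w i)) hlt hj
  push_neg at hnP
  obtain ⟨j', hj', hgt⟩ := hnP
  exact lt_of_lt_of_le hgt (firstCut_spec g n w j' hj')

lemma firstCut_pos {g : V → ℤ} {n : ℕ} {u : V} {w : ℕ → V}
    (hw : IsHSWFrom G g n u w) (hn : 1 ≤ n) : 1 ≤ firstCut g n w := by
  by_contra hc
  have h0 : firstCut g n w = 0 := by omega
  have := firstCut_spec g n w 1 hn
  rw [h0] at this
  have := hw.2 1 le_rfl hn
  omega

end HW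
end BBB

section CCC
variable {V : Type*} {G : SimpleGraph V}

namespace HW

lemma decompSpec :
    ∀ (n : ℕ) (g : V → ℤ) (u : V) (w : ℕ → V), IsHSWFrom G g n u w →
      Glue n w (decompL g n w) ∧ AltBridge G g (decompL g n w) ∧
      List.Chain' (fun x y => y < x) (spansL g (decompL g n w)) ∧
      (∀ x ∈ spansL g (decompL g n w), 1 ≤ x) ∧
      (∀ x ∈ spansL g (decompL g n w), x ≤ g (w (firstCut g n w)) - g u) := by
  intro n
  induction n using Nat.strong_induction_on with
  | _ n IH =>
    intro g u w hw
    cases n with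
    | zero =>
      have hnil : decompL g 0 w = [] := by rw [decompL]
      rw [hnil]
      exact ⟨rfl, trivial, by simp [spansL, List.Chain'], by simp [spansL], by simp [spansL]⟩
    | succ n' =>
      have hu : w 0 = u := hw.1.1.1
      have hfc1 : 1 ≤ firstCut g (n' + 1) w := firstCut_pos hw (by omega)
      have hcN : firstCut g (n' + 1) w ≤ n' + 1 := firstCut_le _ _ _
      have hm1 : max 1 (firstCut g (n' + 1) w) = firstCut g (n' + 1) w := by omega
      rw [decompL, hm1]
      set c := firstCut g (n' + 1) w with hc
      set l := n' + 1 - c with hl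
      set wt := shift c w with hwt
      -- the remainder is a half-space walk for -g
      have hrem : IsHSWFrom G (-g) l (w c) wt := by
        refine ⟨shift_saw hw.1 hcN, fun i h1 hi => ?_⟩
        have h2 := firstCut_last g (n' + 1) w (c + i) (by omega) (by omega)
        rw [← hc] at h2
        simp only [hwt, shift, Pi.neg_apply, add_zero]
        omega
      obtain ⟨hG, hA, hCh, hPos, hBd⟩ := IH l (by omega) (-g) (w c) wt hrem
      have hpin0 : pin c w 0 = w 0 := pin_eq_of_le (Nat.zero_le c)
      have hpinc : pin c w c = w c := pin_eq_of_le le_rfl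
      -- bound for elements of the tail spans
      have htail : ∀ x ∈ spansL (-g) (decompL (-g) l wt), x ≤ g (w c) - g (w 0) - 1 := by
        intro x hx
        have hb := hBd x hx
        set ct := firstCut (-g) l wt with hct
        have hctl : ct ≤ l := firstCut_le _ _ _
        have hcc : c + ct ≤ n' + 1 := by omega
        have h1 : 1 ≤ c + ct := by omega
        have := hw.2 (c + ct) h1 hcc
        simp only [hwt, shift, Pi.neg_apply] at hb
        omega
      refine ⟨⟨hfc1, hcN, rfl, hG⟩, ⟨?_, hA⟩, ?_, ?_, ?_⟩
      · -- head is a bridge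
        show IsBridgeFrom G g c (pin c w 0) (pin c w)
        refine ⟨?_, fun i h1 hic => ?_⟩
        · have hsaw := pin_saw hw.1 hcN
          rwa [show (pin c w) 0 = u from hpin0.trans hu]
        · rw [hpin0, hpinc, pin_eq_of_le hic]
          exact ⟨hw.2 i h1 (by omega), firstCut_spec g (n' + 1) w i (by omega)⟩
      · -- chain of spans
        show List.Chain' _ ((g (pin c w c) - g (pin c w 0)) :: spansL (-g) (decompL (-g) l wt))
        rw [List.Chain', List.isChain_cons]
        refine ⟨fun b hb => ?_, hCh⟩
        have hbmem : b ∈ spansL (-g) (decompL (-g) l wt) := List.mem_of_mem_head? hb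
        have := htail b hbmem
        rw [hpin0, hpinc]
        omega
      · -- positivity
        intro x hx
        rcases List.mem_cons.mp hx with rfl | hx
        · rw [hpin0, hpinc]
          have := hw.2 c hfc1 hcN
          omega
        · exact hPos x hx
      · -- head bound
        intro x hx
        rcases List.mem_cons.mp hx with rfl | hx
        · rw [hpin0, hpinc, hu]
        · have := htail x hx
          rw [← hu]
          omega

end HW
end CCC

section DDD
variable {V : Type*} {G : SimpleGraph V}

namespace HW

lemma wconcat_le {w1 w2 : ℕ → V} {m1 i : ℕ} (h : i ≤ m1) : wconcat m1 w1 w2 i = w1 i :=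
  if_pos h

lemma wconcat_gt {w1 w2 : ℕ → V} {m1 i : ℕ} (h : m1 < i) : wconcat m1 w1 w2 i = w2 (i - m1) :=
  if_neg (by omega)

lemma const_bridge (g : V → ℤ) (z : V) : IsBridgeFrom G g 0 z (fun _ => z) := by
  refine ⟨⟨⟨rfl, fun i hi => absurd hi (by omega), fun i _ => rfl⟩, ?_⟩, fun i h1 h0 => absurd (h1.trans h0) (by omega)⟩
  intro i hi j hj _
  simp only [Set.mem_Iic, Nat.le_zero] at hi hj
  omega

lemma map_bridge {g : V → ℤ} {m : ℕ} {u : V} {w : ℕ → V} (f : V → V)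
    (hadj : ∀ x y, G.Adj x y → G.Adj (f x) (f y)) (hinj : Function.Injective f)
    (hgf : ∀ x y, g (f x) - g (f y) = g x - g y) (hb : IsBridgeFrom G g m u w) :
    IsBridgeFrom G g m (f u) (fun i => f (w i)) := by
  obtain ⟨⟨⟨h0, hadj', hpin⟩, hinj'⟩, hbr⟩ := hb
  refine ⟨⟨⟨congrArg f h0, fun i hi => hadj _ _ (hadj' i hi),
      fun i hi => congrArg f (hpin i hi)⟩, ?_⟩, ?_⟩
  · intro i hi j hj hij
    exact hinj' hi hj (hinj hij)
  · intro i h1 hi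
    show g (f (w 0)) < g (f (w i)) ∧ g (f (w i)) ≤ g (f (w m))
    have e1 := hgf (w 0) (w i)
    have e2 := hgf (w i) (w m)
    have := hbr i h1 hi
    constructor <;> omega

lemma wconcat_end {g : V → ℤ} {m1 m2 : ℕ} {z : V} {w1 w2 : ℕ → V}
    (hb1 : IsBridgeFrom G g m1 z w1) (hb2 : IsBridgeFrom G g m2 (w1 m1) w2) :
    wconcat m1 w1 w2 (m1 + m2) = w2 m2 := by
  rcases Nat.eq_zero_or_pos m2 with rfl | h2
  · rw [add_zero, wconcat_le le_rfl, ← hb2.1.1.1]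
  · rw [wconcat_gt (by omega)]
    congr 1
    omega

lemma wconcat_bridge {g : V → ℤ} {m1 m2 : ℕ} {z : V} {w1 w2 : ℕ → V}
    (hb1 : IsBridgeFrom G g m1 z w1) (hb2 : IsBridgeFrom G g m2 (w1 m1) w2) :
    IsBridgeFrom G g (m1 + m2) z (wconcat m1 w1 w2) := by
  have h20 : w2 0 = w1 m1 := hb2.1.1.1
  have h10 : w1 0 = z := hb1.1.1.1
  have hup1 : ∀ i ≤ m1, g z ≤ g (w1 i) := by
    intro i hi
    rcases Nat.eq_zero_or_pos i with rfl | h1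
    · rw [h10]
    · have := (hb1.2 i h1 hi).1
      rw [h10] at this
      omega
  have hle1 : ∀ i ≤ m1, g (w1 i) ≤ g (w1 m1) := by
    intro i hi
    rcases Nat.eq_zero_or_pos i with rfl | h1
    · rcases Nat.eq_zero_or_pos m1 with rfl | hm1
      · exact le_rfl
      · have := (hb1.2 m1 hm1 le_rfl).1
        rw [h10] at this ⊢
        have := hup1 m1 le_rfl
        omega
    · exact (hb1.2 i h1 hi).2
  have hgt2 : ∀ j, 1 ≤ j → j ≤ m2 → g (w1 m1) < g (w2 j) := by
    intro j h1 hj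
    have := (hb2.2 j h1 hj).1
    rwa [h20] at this
  have hle2 : ∀ j ≤ m2, g (w2 j) ≤ g (w2 m2) := by
    intro j hj
    rcases Nat.eq_zero_or_pos j with rfl | h1
    · rcases Nat.eq_zero_or_pos m2 with rfl | hm2
      · exact le_rfl
      · exact ((hb2.2 m2 hm2 le_rfl).1).le
    · exact (hb2.2 j h1 hj).2
  have hend : wconcat m1 w1 w2 (m1 + m2) = w2 m2 := wconcat_end hb1 hb2
  refine ⟨⟨⟨?_, ?_, ?_⟩, ?_⟩, ?_⟩
  · rw [wconcat_le (Nat.zero_le m1), h10]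
  · -- adjacency
    intro i hi
    rcases Nat.lt_or_ge i m1 with h | h
    · rw [wconcat_le h.le, wconcat_le (by omega : i + 1 ≤ m1)]
      exact hb1.1.1.2.1 i h
    · rcases Nat.eq_or_lt_of_le h with heq | h'
      · have hi' : i = m1 := heq.symm
        rw [wconcat_le (le_of_eq hi'), wconcat_gt (by omega), show i + 1 - m1 = 1 by omega, hi',
          ← h20]
        exact hb2.1.1.2.1 0 (by omega)
      · rw [wconcat_gt h', wconcat_gt (by omega)]
        have : i + 1 - m1 = (i - m1) + 1 := by omega
        rw [this]
        exact hb2.1.1.2.1 (i - m1) (by omega)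
  · -- pinned
    intro i hi
    rw [hend]
    rcases Nat.lt_or_ge m1 i with h | h
    · rw [wconcat_gt h]
      exact hb2.1.1.2.2 (i - m1) (by omega)
    · have hi' : i = m1 := by omega
      have hm2 : m2 = 0 := by omega
      rw [wconcat_le h, hi', hm2]
      exact h20.symm
  · -- injectivity
    intro i hi j hj hij
    simp only [Set.mem_Iic] at hi hj
    rcases le_or_gt i m1 with hi1 | hi1 <;> rcases le_or_gt j m1 with hj1 | hj1
    · rw [wconcat_le hi1, wconcat_le hj1] at hij
      exact hb1.1.2 (Set.mem_Iic.mpr hi1) (Set.mem_Iic.mpr hj1) hij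
    · rw [wconcat_le hi1, wconcat_gt hj1] at hij
      have := hgt2 (j - m1) (by omega) (by omega)
      have := hle1 i hi1
      rw [hij] at *
      omega
    · rw [wconcat_gt hi1, wconcat_le hj1] at hij
      have := hgt2 (i - m1) (by omega) (by omega)
      have := hle1 j hj1
      rw [← hij] at *
      omega
    · rw [wconcat_gt hi1, wconcat_gt hj1] at hij
      have := hb2.1.2 (Set.mem_Iic.mpr (by omega : i - m1 ≤ m2))
        (Set.mem_Iic.mpr (by omega : j - m1 ≤ m2)) hij
      omega
  · -- bridge inequalities
    intro i h1 hi
    rw [wconcat_le (Nat.zero_le m1), h10, hend]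
    rcases le_or_gt i m1 with hi1 | hi1
    · rw [wconcat_le hi1]
      constructor
      · have := (hb1.2 i h1 hi1).1
        rw [h10] at this
        exact this
      · have := hle1 i hi1
        have h0' : g (w2 0) ≤ g (w2 m2) := hle2 0 (Nat.zero_le m2)
        rw [h20] at h0'
        omega
    · rw [wconcat_gt hi1]
      constructor
      · have := hgt2 (i - m1) (by omega) (by omega)
        have := hup1 m1 le_rfl
        omega
      · exact hle2 (i - m1) (by omega)

end HW
end DDD

section EEE
variable {V : Type*} {G : SimpleGraph V}

namespace HW

lemma stack2_fst_zero (T : V → V → V → V) (hT0 : ∀ u z, T u z u = z) :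
    ∀ (L : List (ℕ × (ℕ → V))) (zO zE : V), (stack2 T zO zE L).1 0 = zO := by
  intro L zO zE
  cases L with
  | nil => rfl
  | cons p L =>
    obtain ⟨m, ω⟩ := p
    show wconcat m (fun i => T (ω 0) zO (ω i)) (stack2 T zE (T (ω 0) zO (ω m)) L).2 0 = zO
    rw [wconcat_le (Nat.zero_le m)]
    exact hT0 (ω 0) zO

lemma stack2_snd_zero (T : V → V → V → V) (hT0 : ∀ u z, T u z u = z) :
    ∀ (L : List (ℕ × (ℕ → V))) (zO zE : V), (stack2 T zO zE L).2 0 = zE := by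
  intro L zO zE
  cases L with
  | nil => rfl
  | cons p L =>
    obtain ⟨m, ω⟩ := p
    exact stack2_fst_zero T hT0 L zE _

lemma stack2_cons_fst (T : V → V → V → V) (m : ℕ) (ω : ℕ → V) (L : List (ℕ × (ℕ → V)))
    (zO zE : V) :
    (stack2 T zO zE ((m, ω) :: L)).1 =
      wconcat m (fun i => T (ω 0) zO (ω i)) (stack2 T zE (T (ω 0) zO (ω m)) L).2 := rfl

lemma stack2_cons_le (T : V → V → V → V) {m : ℕ} {ω : ℕ → V} {L : List (ℕ × (ℕ → V))}
    {zO zE : V} {i : ℕ} (hi : i ≤ m) :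
    (stack2 T zO zE ((m, ω) :: L)).1 i = T (ω 0) zO (ω i) := by
  rw [stack2_cons_fst]
  exact wconcat_le hi

lemma stack2_cons_shift (T : V → V → V → V) (hT0 : ∀ u z, T u z u = z) {m : ℕ} {ω : ℕ → V}
    {L : List (ℕ × (ℕ → V))} {zO zE : V} (i : ℕ) :
    (stack2 T zO zE ((m, ω) :: L)).1 (m + i) =
      (stack2 T zE (T (ω 0) zO (ω m)) L).2 i := by
  rw [stack2_cons_fst]
  cases i with
  | zero =>
    rw [add_zero]
    show wconcat _ _ _ m = _
    rw [wconcat_le le_rfl, stack2_snd_zero T hT0]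
  | succ i =>
    show wconcat _ _ _ (m + (i + 1)) = _
    rw [wconcat_gt (by omega), show m + (i + 1) - m = i + 1 by omega]

lemma stack2_cons_snd (T : V → V → V → V) {m : ℕ} {ω : ℕ → V} {L : List (ℕ × (ℕ → V))}
    {zO zE : V} :
    (stack2 T zO zE ((m, ω) :: L)).2 = (stack2 T zE (T (ω 0) zO (ω m)) L).1 := rfl

lemma stack2_spec (T : V → V → V → V) (hT0 : ∀ u z, T u z u = z)
    (hTadj : ∀ u z x y, G.Adj x y → G.Adj (T u z x) (T u z y))
    (hTinj : ∀ u z, Function.Injective (T u z)) :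
    ∀ (L : List (ℕ × (ℕ → V))) (g : V → ℤ),
      (∀ u z x y, g (T u z x) - g (T u z y) = g x - g y) → ∀ (zO zE : V),
      AltBridge G g L →
      IsBridgeFrom G g (lens L).1 zO (stack2 T zO zE L).1 ∧
      IsBridgeFrom G (-g) (lens L).2 zE (stack2 T zO zE L).2 ∧
      g ((stack2 T zO zE L).1 ((lens L).1)) - g zO = (spans2 g L).1 ∧
      g zE - g ((stack2 T zO zE L).2 ((lens L).2)) = (spans2 g L).2 := by
  intro L
  induction L with
  | nil =>
    intro g hg zO zE _
    refine ⟨const_bridge g zO, const_bridge (-g) zE, ?_, ?_⟩ <;> simp [stack2, lens, spans2]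
  | cons p L IHL =>
    obtain ⟨m, ω⟩ := p
    intro g hg zO zE hAB
    obtain ⟨hb, hA⟩ := hAB
    have hg' : ∀ u z x y, (-g) (T u z x) - (-g) (T u z y) = (-g) x - (-g) y := by
      intro u z x y
      have := hg u z x y
      simp only [Pi.neg_apply]
      omega
    set z' := T (ω 0) zO (ω m) with hz'
    obtain ⟨hE, hO', hsE, hsO'⟩ := IHL (-g) hg' zE z' hA
    rw [neg_neg] at hO'
    -- translated head piece
    have hbT : IsBridgeFrom G g m zO (fun i => T (ω 0) zO (ω i)) := by
      have := map_bridge (T (ω 0) zO) (fun x y => hTadj (ω 0) zO x y) (hTinj (ω 0) zO)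
        (fun x y => hg (ω 0) zO x y) hb
      rwa [hT0 (ω 0) zO] at this
    have hb2 : IsBridgeFrom G g ((lens L).2) ((fun i => T (ω 0) zO (ω i)) m)
        (stack2 T zE z' L).2 := hO'
    have hcon := wconcat_bridge hbT hb2
    have hend := wconcat_end hbT hb2
    have hzz : g z' - g zO = g (ω m) - g (ω 0) := by
      have h5 := hg (ω 0) zO (ω m) (ω 0)
      rw [hT0 (ω 0) zO, ← hz'] at h5
      omega
    refine ⟨hcon, hE, ?_, ?_⟩
    · show g (wconcat m (fun i => T (ω 0) zO (ω i)) (stack2 T zE z' L).2 (m + (lens L).2)) -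
          g zO = (g (ω m) - g (ω 0)) + (spans2 (-g) L).2
      rw [hend]
      simp only [Pi.neg_apply] at hsO'
      omega
    · show g zE - g ((stack2 T zE z' L).1 ((lens L).1)) = (spans2 (-g) L).1
      simp only [Pi.neg_apply] at hsE
      omega

end HW
end EEE

section FFF
variable {V : Type*} {G : SimpleGraph V}

namespace HW

lemma bridge_le_end {g : V → ℤ} {m : ℕ} {u : V} {ω : ℕ → V} (hb : IsBridgeFrom G g m u ω) :
    ∀ i ≤ m, g (ω i) ≤ g (ω m) := by
  intro i hi
  rcases Nat.eq_zero_or_pos i with rfl | h1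
  · rcases Nat.eq_zero_or_pos m with rfl | hm
    · exact le_rfl
    · exact ((hb.2 m hm le_rfl).1).le
  · exact (hb.2 i h1 hi).2

lemma glue_lens : ∀ (L : List (ℕ × (ℕ → V))) (n : ℕ) (w : ℕ → V), Glue n w L →
    (lens L).1 + (lens L).2 = n := by
  intro L
  induction L with
  | nil => intro n w hG; exact hG ▸ rfl
  | cons p L IHL =>
    obtain ⟨m, ω⟩ := p
    intro n w hG
    obtain ⟨h1, hmn, hω, hGt⟩ := hG
    have := IHL (n - m) (shift m w) hGt
    show m + (lens L).2 + (lens L).1 = n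
    omega

lemma stack2_le (T : V → V → V → V) (hT0 : ∀ u z, T u z u = z) {g : V → ℤ}
    (hg : ∀ u z x y, g (T u z x) - g (T u z y) = g x - g y)
    {m : ℕ} {ω : ℕ → V} {L : List (ℕ × (ℕ → V))} {zO zE : V}
    (hAB : AltBridge G g ((m, ω) :: L)) :
    ∀ i ≤ m, g ((stack2 T zO zE ((m, ω) :: L)).1 i) - g zO ≤ g (ω m) - g (ω 0) := by
  intro i hi
  rw [stack2_cons_le T hi]
  have h6 := hg (ω 0) zO (ω i) (ω 0)
  rw [hT0] at h6
  have h7 := bridge_le_end hAB.1 i hi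
  omega

lemma stack2_cut (T : V → V → V → V) (hT0 : ∀ u z, T u z u = z)
    (hTadj : ∀ u z x y, G.Adj x y → G.Adj (T u z x) (T u z y))
    (hTinj : ∀ u z, Function.Injective (T u z)) {g : V → ℤ}
    (hg : ∀ u z x y, g (T u z x) - g (T u z y) = g x - g y)
    {m : ℕ} {ω : ℕ → V} {L : List (ℕ × (ℕ → V))} {zO zE : V}
    (hAB : AltBridge G g ((m, ω) :: L)) :
    ∀ i, m < i → i ≤ (lens ((m, ω) :: L)).1 →
      g (ω m) - g (ω 0) < g ((stack2 T zO zE ((m, ω) :: L)).1 i) - g zO := by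
  intro i him hil
  have hg' : ∀ u z x y, (-g) (T u z x) - (-g) (T u z y) = (-g) x - (-g) y := by
    intro u z x y
    have := hg u z x y
    simp only [Pi.neg_apply]
    omega
  have hO' := (stack2_spec T hT0 hTadj hTinj L (-g) hg' zE (T (ω 0) zO (ω m)) hAB.2).2.1
  rw [neg_neg] at hO'
  have hlen : i - m ≤ (lens L).2 := by
    have : (lens ((m, ω) :: L)).1 = m + (lens L).2 := rfl
    omega
  have hstr := (hO'.2 (i - m) (by omega) hlen).1
  rw [hO'.1.1.1] at hstr
  have hval : (stack2 T zO zE ((m, ω) :: L)).1 i = (stack2 T zE (T (ω 0) zO (ω m)) L).2 (i - m) := by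
    have hsh := stack2_cons_shift T hT0 (m := m) (ω := ω) (L := L) (zO := zO) (zE := zE) (i - m)
    rw [show m + (i - m) = i by omega] at hsh
    exact hsh
  rw [hval]
  have h6 := hg (ω 0) zO (ω m) (ω 0)
  rw [hT0] at h6
  omega

lemma stack2_inj (T : V → V → V → V) (hT0 : ∀ u z, T u z u = z)
    (hTadj : ∀ u z x y, G.Adj x y → G.Adj (T u z x) (T u z y))
    (hTinj : ∀ u z, Function.Injective (T u z)) :
    ∀ (L L' : List (ℕ × (ℕ → V))) (g : V → ℤ),
      (∀ u z x y, g (T u z x) - g (T u z y) = g x - g y) →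
      ∀ (n : ℕ) (w w' : ℕ → V) (zO zE : V),
      Glue n w L → Glue n w' L' → w 0 = w' 0 →
      AltBridge G g L → AltBridge G g L' →
      spansL g L = spansL g L' →
      (lens L).1 = (lens L').1 →
      stack2 T zO zE L = stack2 T zO zE L' →
      L = L' := by
  intro L
  induction L with
  | nil =>
    intro L' g hg n w w' zO zE hGL hGL' hww hAB hAB' hsp hlen hS
    cases L' with
    | nil => rfl
    | cons p' L' =>
      obtain ⟨m', ω'⟩ := p'
      obtain ⟨h1', hmn', _, _⟩ := hGL'
      have h0 : n = 0 := hGL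
      omega
  | cons p Lt IHL =>
    obtain ⟨m, ω⟩ := p
    intro L' g hg n w w' zO zE hGL hGL' hww hAB hAB' hsp hlen hS
    cases L' with
    | nil =>
      obtain ⟨h1, hmn, _, _⟩ := hGL
      have h0 : n = 0 := hGL'
      omega
    | cons p' Lt' =>
      obtain ⟨m', ω'⟩ := p'
      obtain ⟨hm1, hmn, hωeq, hGt⟩ := hGL
      obtain ⟨hm1', hmn', hωeq', hGt'⟩ := hGL'
      obtain ⟨hb, hAt⟩ := hAB
      obtain ⟨hb', hAt'⟩ := hAB'
      have hg' : ∀ u z x y, (-g) (T u z x) - (-g) (T u z y) = (-g) x - (-g) y := by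
        intro u z x y
        have := hg u z x y
        simp only [Pi.neg_apply]
        omega
      have hsp' : (g (ω m) - g (ω 0)) :: spansL (-g) Lt =
          (g (ω' m') - g (ω' 0)) :: spansL (-g) Lt' := hsp
      have hα : g (ω m) - g (ω 0) = g (ω' m') - g (ω' 0) := (List.cons_eq_cons.mp hsp').1
      have hst : spansL (-g) Lt = spansL (-g) Lt' := (List.cons_eq_cons.mp hsp').2
      have hω0 : ω 0 = ω' 0 := by
        rw [hωeq, hωeq', pin_eq_of_le (Nat.zero_le m), pin_eq_of_le (Nat.zero_le m'), hww]
      have hS1 : (stack2 T zO zE ((m, ω) :: Lt)).1 = (stack2 T zO zE ((m', ω') :: Lt')).1 :=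
        congrArg Prod.fst hS
      have hlen' : m + (lens Lt).2 = m' + (lens Lt').2 := hlen
      have hmm : m = m' := by
        rcases lt_trichotomy m m' with hlt | heq | hgt
        · exfalso
          have hcut := stack2_cut T hT0 hTadj hTinj hg (zO := zO) (zE := zE) ⟨hb, hAt⟩ m' hlt
            (show m' ≤ m + (lens Lt).2 by omega)
          have hle' := stack2_le T hT0 hg (zO := zO) (zE := zE) ⟨hb', hAt'⟩ m' le_rfl
          rw [hS1] at hcut
          omega
        · exact heq
        · exfalso
          have hcut := stack2_cut T hT0 hTadj hTinj hg (zO := zO) (zE := zE) ⟨hb', hAt'⟩ m hgt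
            (show m ≤ m' + (lens Lt').2 by omega)
          have hle := stack2_le T hT0 hg (zO := zO) (zE := zE) ⟨hb, hAt⟩ m le_rfl
          rw [← hS1] at hcut
          omega
      subst hmm
      have hcore : ∀ i ≤ m, ω i = ω' i := by
        intro i hi
        have e1 := stack2_cons_le T (ω := ω) (L := Lt) (zO := zO) (zE := zE) hi
        have e2 := stack2_cons_le T (ω := ω') (L := Lt') (zO := zO) (zE := zE) hi
        have e3 : T (ω 0) zO (ω i) = T (ω' 0) zO (ω' i) := by rw [← e1, ← e2, hS1]
        rw [← hω0] at e3
        exact hTinj _ _ e3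
      have hωω : ω = ω' := by
        funext i
        rcases le_or_gt i m with hi | hi
        · exact hcore i hi
        · have p1 : ω i = ω m := by
            rw [hωeq]
            show w (min i m) = w (min m m)
            rw [Nat.min_eq_right hi.le, Nat.min_self]
          have p2 : ω' i = ω' m := by
            rw [hωeq']
            show w' (min i m) = w' (min m m)
            rw [Nat.min_eq_right hi.le, Nat.min_self]
          rw [p1, p2, hcore m le_rfl]
      subst hωω
      have hTails : stack2 T zE (T (ω 0) zO (ω m)) Lt = stack2 T zE (T (ω 0) zO (ω m)) Lt' := by
        refine Prod.ext ?_ ?_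
        · exact congrArg Prod.snd hS
        · funext i
          rw [← stack2_cons_shift T hT0 (L := Lt) (zO := zO) (zE := zE) i,
            ← stack2_cons_shift T hT0 (L := Lt') (zO := zO) (zE := zE) i, hS1]
      have hwm : w m = w' m := by
        have e1 : ω m = w m := by rw [hωeq]; exact pin_eq_of_le le_rfl
        have e2 : ω m = w' m := by rw [hωeq']; exact pin_eq_of_le le_rfl
        rw [← e1, ← e2]
      have hstart : (shift m w) 0 = (shift m w') 0 := by
        show w (m + 0) = w' (m + 0)
        simpa using hwm
      have hlt1 : (lens Lt).1 = (lens Lt').1 := by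
        have gl : (m + (lens Lt).2) + (lens Lt).1 = n :=
          glue_lens ((m, ω) :: Lt) n w ⟨hm1, hmn, hωeq, hGt⟩
        have gl' : (m + (lens Lt').2) + (lens Lt').1 = n :=
          glue_lens ((m, ω) :: Lt') n w' ⟨hm1', hmn', hωeq', hGt'⟩
        omega
      have htails_eq := IHL Lt' (-g) hg' (n - m) (shift m w) (shift m w') zE
        (T (ω 0) zO (ω m)) hGt hGt' hstart hAt hAt' hst hlt1 hTails
      rw [htails_eq]

end HW
end FFF

section GGG
variable {V : Type*} {G : SimpleGraph V}

namespace HW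

lemma walk_finite (hlf : ∀ v : V, (G.neighborSet v).Finite) :
    ∀ (n : ℕ) (v : V), {w : ℕ → V | IsWalkFrom G n v w}.Finite := by
  intro n
  induction n with
  | zero =>
    intro v
    apply Set.Finite.subset (Set.finite_singleton (fun _ => v))
    intro w hw
    simp only [Set.mem_singleton_iff]
    funext i
    exact (hw.2.2 i (Nat.zero_le i)).trans hw.1
  | succ n IH =>
    intro v
    apply Set.Finite.subset
      (Set.Finite.biUnion (IH v) (fun w' _ => Set.Finite.biUnion (hlf (w' n))
        (fun x _ => Set.finite_singleton (fun i => if i ≤ n then w' i else x))))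
    intro w hw
    simp only [Set.mem_iUnion, Set.mem_singleton_iff]
    refine ⟨pin n w, pin_walk hw (by omega), w (n + 1), ?_, ?_⟩
    · rw [pin_eq_of_le le_rfl]
      exact hw.2.1 n (by omega)
    · funext i
      by_cases hi : i ≤ n
      · rw [if_pos hi, pin_eq_of_le hi]
      · rw [if_neg hi, hw.2.2 i (by omega)]

lemma zero_walk_eq {u : V} {w : ℕ → V} (hw : IsWalkFrom G 0 u w) : w = fun _ => u :=
  funext fun i => (hw.2.2 i (Nat.zero_le i)).trans hw.1

lemma const_saw (z : V) : IsSAWFrom G 0 z (fun _ => z) := by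
  refine ⟨⟨rfl, fun i hi => absurd hi (by omega), fun i _ => rfl⟩, ?_⟩
  intro i hi j hj _
  simp only [Set.mem_Iic, Nat.le_zero] at hi hj
  omega

lemma const_rbridge (g : V → ℤ) (z : V) : IsRBridgeFrom G g 0 z (fun _ => z) :=
  ⟨const_saw z, fun i h1 h0 => absurd (h1.trans h0) (by omega)⟩

lemma const_hsw (g : V → ℤ) (z : V) : IsHSWFrom G g 0 z (fun _ => z) :=
  ⟨const_saw z, fun i h1 h0 => absurd (h1.trans h0) (by omega)⟩

lemma walk_lip {g : V → ℤ} {dz : ℤ} {n : ℕ} {u : V} {w : ℕ → V}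
    (hLip : ∀ x y, G.Adj x y → |g x - g y| ≤ dz) (hw : IsWalkFrom G n u w) :
    ∀ i ≤ n, |g (w i) - g (w 0)| ≤ dz * i := by
  intro i
  induction i with
  | zero => intro _; simp
  | succ i IHi =>
    intro hi
    have h1 := IHi (by omega)
    have h2 := hLip (w i) (w (i + 1)) (hw.2.1 i (by omega))
    have h3 : |g (w (i + 1)) - g (w 0)| ≤ |g (w (i + 1)) - g (w i)| + |g (w i) - g (w 0)| :=
      abs_sub_le _ _ _
    rw [abs_sub_comm] at h2
    have h4 : (dz : ℤ) * (i + 1 : ℕ) = dz * i + dz := by push_cast; ring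
    rw [h4]
    omega

lemma spans_sum_le {dz : ℤ} :
    ∀ (L : List (ℕ × (ℕ → V))) (g : V → ℤ), (∀ x y, G.Adj x y → |g x - g y| ≤ dz) →
      ∀ (n : ℕ) (u : V) (w : ℕ → V), Glue n w L → IsWalkFrom G n u w →
      (spansL g L).sum ≤ dz * n := by
  intro L
  induction L with
  | nil =>
    intro g hLip n u w hG hw
    have h0 : n = 0 := hG
    subst h0
    simp [spansL]
  | cons p L IHL =>
    obtain ⟨m, ω⟩ := p
    intro g hLip n u w hG hw
    obtain ⟨h1, hmn, hω, hGt⟩ := hG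
    have hLip' : ∀ x y, G.Adj x y → |(-g) x - (-g) y| ≤ dz := by
      intro x y hxy
      have := hLip x y hxy
      simp only [Pi.neg_apply]
      rw [show -g x - -g y = -(g x - g y) by ring, abs_neg]
      exact this
    have htail := IHL (-g) hLip' (n - m) (w m) (shift m w) hGt (shift_walk hw hmn)
    have hhead : g (ω m) - g (ω 0) ≤ dz * m := by
      rw [hω, pin_eq_of_le le_rfl, pin_eq_of_le (Nat.zero_le m)]
      have := walk_lip hLip hw m hmn
      have habs := le_abs_self (g (w m) - g (w 0))
      omega
    show (g (ω m) - g (ω 0)) + (spansL (-g) L).sum ≤ dz * n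
    have hc : (dz : ℤ) * m + dz * ((n : ℤ) - m) = dz * n := by ring
    have hcast : ((n - m : ℕ) : ℤ) = (n : ℤ) - m := by
      rw [Nat.cast_sub hmn]
    rw [hcast] at htail
    omega

lemma spans2_sum : ∀ (L : List (ℕ × (ℕ → V))) (g : V → ℤ),
    (spans2 g L).1 + (spans2 g L).2 = (spansL g L).sum := by
  intro L
  induction L with
  | nil => intro g; simp [spans2, spansL]
  | cons p L IHL =>
    obtain ⟨m, ω⟩ := p
    intro g
    have := IHL (-g)
    show (g (ω m) - g (ω 0)) + (spans2 (-g) L).2 + (spans2 (-g) L).1 =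
      ((g (ω m) - g (ω 0)) :: spansL (-g) L).sum
    rw [List.sum_cons]
    omega

lemma glue_det : ∀ (L : List (ℕ × (ℕ → V))) (n : ℕ) (w w' : ℕ → V),
    Glue n w L → Glue n w' L → w 0 = w' 0 → ∀ i ≤ n, w i = w' i := by
  intro L
  induction L with
  | nil =>
    intro n w w' hG hG' hww i hi
    have h0 : n = 0 := hG
    have hi0 : i = 0 := by omega
    rw [hi0]
    exact hww
  | cons p L IHL =>
    obtain ⟨m, ω⟩ := p
    intro n w w' hG hG' hww i hi
    obtain ⟨h1, hmn, hω, hGt⟩ := hG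
    obtain ⟨h1', hmn', hω', hGt'⟩ := hG'
    have hpin : pin m w = pin m w' := hω.symm.trans hω'
    have hle : ∀ j ≤ m, w j = w' j := by
      intro j hj
      rw [← pin_eq_of_le hj (w := w), ← pin_eq_of_le hj (w := w'), hpin]
    rcases le_or_gt i m with him | him
    · exact hle i him
    · have := IHL (n - m) (shift m w) (shift m w') hGt hGt'
        (by show w (m + 0) = w' (m + 0); simpa using hle m le_rfl) (i - m) (by omega)
      have heq : m + (i - m) = i := by omega
      simp only [shift, heq] at this
      exact this

lemma rbridge_iff {g : V → ℤ} {l : ℕ} {z : V} {ω : ℕ → V} :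
    IsRBridgeFrom G g l z ω ↔ IsBridgeFrom G (-g) l z ω := by
  constructor
  · rintro ⟨hs, hb⟩
    refine ⟨hs, fun i h1 hi => ?_⟩
    have := hb i h1 hi
    simp only [Pi.neg_apply]
    omega
  · rintro ⟨hs, hb⟩
    refine ⟨hs, fun i h1 hi => ?_⟩
    have := hb i h1 hi
    simp only [Pi.neg_apply] at this
    omega

end HW
end GGG

section HHH
variable {V : Type*} {G : SimpleGraph V}

namespace HW

def packL (N : ℕ) (l : List ℕ) : List ℕ := (l.headI + (N - l.sum)) :: l.tail

lemma packL_sum {N : ℕ} {l : List ℕ} (hl : l ≠ []) (hs : l.sum ≤ N) : (packL N l).sum = N := by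
  obtain ⟨x, xs, rfl⟩ := List.exists_cons_of_ne_nil hl
  show (x + (N - (x :: xs).sum)) + xs.sum = N
  have : (x :: xs).sum = x + xs.sum := by simp
  omega

lemma packL_pos {N : ℕ} {l : List ℕ} (hl : l ≠ []) (h1 : ∀ x ∈ l, 1 ≤ x) :
    ∀ x ∈ packL N l, 0 < x := by
  obtain ⟨x, xs, rfl⟩ := List.exists_cons_of_ne_nil hl
  intro y hy
  simp only [packL, List.headI, List.tail_cons] at hy
  rcases List.mem_cons.mp hy with rfl | hy
  · have := h1 x (by simp)
    have h2 : (x :: xs).sum = x + xs.sum := by simp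
    omega
  · exact h1 y (List.mem_cons_of_mem x hy)

lemma packL_pairwise {N : ℕ} {l : List ℕ} (hl : l ≠ [])
    (hc : List.Chain' (fun x y => y < x) l) :
    List.Pairwise (fun x y => y < x) (packL N l) := by
  obtain ⟨x, xs, rfl⟩ := List.exists_cons_of_ne_nil hl
  haveI : IsTrans ℕ (fun x y => y < x) := ⟨fun a b c h1 h2 => by omega⟩
  have hpw : List.Pairwise (fun x y => y < x) (x :: xs) := List.isChain_iff_pairwise.mp hc
  simp only [packL, List.headI, List.tail_cons]
  rw [List.pairwise_cons] at hpw ⊢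
  refine ⟨fun y hy => ?_, hpw.2⟩
  have := hpw.1 y hy
  omega

lemma packL_inj {N : ℕ} {a b : List ℕ} (ha : a ≠ []) (hb : b ≠ [])
    (hca : List.Chain' (fun x y => y < x) a) (hcb : List.Chain' (fun x y => y < x) b)
    (hsum : a.sum = b.sum)
    (hperm : List.Perm (packL N a) (packL N b)) : a = b := by
  haveI : IsAntisymm ℕ (fun x y => y < x) := ⟨fun p q h1 h2 => by omega⟩
  have hsa := packL_pairwise (N := N) ha hca
  have hsb := packL_pairwise (N := N) hb hcb
  have heq : packL N a = packL N b := List.Perm.eq_of_pairwise' hsa hsb hperm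
  obtain ⟨x, xs, rfl⟩ := List.exists_cons_of_ne_nil ha
  obtain ⟨y, ys, rfl⟩ := List.exists_cons_of_ne_nil hb
  simp only [packL, List.headI, List.tail_cons] at heq
  have h1 : x + (N - (x :: xs).sum) = y + (N - (y :: ys).sum) := (List.cons_eq_cons.mp heq).1
  have h2 : xs = ys := (List.cons_eq_cons.mp heq).2
  have hx : x = y := by
    have e1 : (x :: xs).sum = x + xs.sum := by simp
    have e2 : (y :: ys).sum = y + ys.sum := by simp
    subst h2
    omega
  rw [hx, h2]

lemma toNat_cast_list : ∀ (l : List ℤ), (∀ z ∈ l, 0 ≤ z) →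
    (l.map Int.toNat).map (fun x : ℕ => (x : ℤ)) = l := by
  intro l
  induction l with
  | nil => intro _; rfl
  | cons z l IH =>
    intro hpos
    simp only [List.map_cons, List.cons.injEq]
    constructor
    · have := hpos z (by simp)
      omega
    · exact IH fun x hx => hpos x (List.mem_cons_of_mem z hx)

lemma toNat_sum_list : ∀ (l : List ℤ), (∀ z ∈ l, 0 ≤ z) →
    ((l.map Int.toNat).sum : ℤ) = l.sum := by
  intro l
  induction l with
  | nil => intro _; rfl
  | cons z l IH =>
    intro hpos
    simp only [List.map_cons, List.sum_cons]
    rw [Nat.cast_add, IH fun x hx => hpos x (List.mem_cons_of_mem z hx)]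
    have := hpos z (by simp)
    omega

lemma chain_toNat : ∀ (l : List ℤ), (∀ z ∈ l, 1 ≤ z) →
    List.Chain' (fun x y => y < x) l →
    List.Chain' (fun x y : ℕ => y < x) (l.map Int.toNat) := by
  intro l
  induction l with
  | nil => intro _ _; simp [List.Chain']
  | cons z l IH =>
    intro hpos hc
    rcases l with _ | ⟨z', l'⟩
    · simp [List.Chain']
    · rw [List.map_cons, List.map_cons]
      rw [List.Chain', List.isChain_cons_cons] at hc ⊢
      constructor
      · have h1 := hpos z' (by simp)
        have := hc.1
        omega
      · have := IH (fun x hx => hpos x (List.mem_cons_of_mem z hx)) hc.2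
        rwa [List.map_cons] at this
    
lemma pos_toNat {l : List ℤ} (hpos : ∀ z ∈ l, 1 ≤ z) : ∀ x ∈ l.map Int.toNat, 1 ≤ x := by
  intro x hx
  obtain ⟨z, hz, rfl⟩ := List.mem_map.mp hx
  have := hpos z hz
  omega

lemma unique_zero {P : (ℕ → V) → Prop} {v : V} (hconst : P (fun _ => v))
    (hdet : ∀ w, P w → w = fun _ => v) : Nat.card {w : ℕ → V // P w} = 1 := by
  haveI : Unique {w : ℕ → V // P w} :=
    ⟨⟨⟨fun _ => v, hconst⟩⟩, fun x => Subtype.ext (hdet x.1 x.2)⟩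
  exact Nat.card_unique

lemma heq_extract {Q R : ℕ → (ℕ → V) → Prop} : ∀ {m m' : ℕ}, m = m' →
    ∀ {p : {ω : ℕ → V // Q m ω} × {ω : ℕ → V // R m ω}}
      {p' : {ω : ℕ → V // Q m' ω} × {ω : ℕ → V // R m' ω}},
    HEq p p' → p.1.1 = p'.1.1 ∧ p.2.1 = p'.2.1 := by
  rintro m m' rfl p p' hp
  rw [eq_of_heq hp]
  exact ⟨rfl, rfl⟩

end HW
end HHH

section III
variable {V : Type*} {G : SimpleGraph V}

namespace HW

lemma decompL_ne_nil (g : V → ℤ) (n : ℕ) (w : ℕ → V) (hn : 1 ≤ n) : decompL g n w ≠ [] := by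
  cases n with
  | zero => omega
  | succ n =>
    rw [decompL]
    exact List.cons_ne_nil _ _

lemma spansL_ne_nil {g : V → ℤ} {L : List (ℕ × (ℕ → V))} (hL : L ≠ []) : spansL g L ≠ [] := by
  cases L with
  | nil => exact absurd rfl hL
  | cons p L =>
    obtain ⟨m, ω⟩ := p
    exact List.cons_ne_nil _ _

end HW
end III


/-- In the transitive case, `h_n ≤ P_D(d·n) · Σ_{m=0}^{n} b_m · b̄_{n−m}`. -/
theorem statement_5 {V : Type*} (G : SimpleGraph V)
    (hinf : Infinite V) (hlf : ∀ v : V, (G.neighborSet v).Finite) (hconn : G.Connected)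
    (h : V → ℤ) (Γ : Subgroup (G ≃g G)) (hghf : IsGraphHeightFunction G h Γ)
    (htrans : ∀ u v : V, ∃ γ ∈ Γ, γ u = v)
    (d : ℕ) (hd : IsLeast {z : ℤ | ∀ u v : V, G.Adj u v → h u - h v ≤ z} (d : ℤ))
    (n : ℕ) (v : V) :
    hswCount G h n v ≤
      distinctPartitionCount (d * n) *
        ∑ m ∈ Finset.range (n + 1), bridgeCount G h m v * rbridgeCount G h (n - m) v := by

  classical
  have hLip : ∀ x y : V, G.Adj x y → |h x - h y| ≤ (d : ℤ) := by
    intro x y hxy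
    have h1 := hd.1 x y hxy
    have h2 := hd.1 y x hxy.symm
    rw [abs_le]
    constructor <;> omega
  rcases Nat.eq_zero_or_pos n with rfl | hn
  · -- the case n = 0
    have hhsw : hswCount G h 0 v = 1 :=
      HW.unique_zero (HW.const_hsw h v) (fun w hw => HW.zero_walk_eq hw.1.1)
    have hb0 : bridgeCount G h 0 v = 1 :=
      HW.unique_zero (HW.const_bridge h v) (fun w hw => HW.zero_walk_eq hw.1.1)
    have hr0 : rbridgeCount G h (0 - 0) v = 1 :=
      HW.unique_zero (HW.const_rbridge h v) (fun w hw => HW.zero_walk_eq hw.1.1)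
    have hpd : 1 ≤ distinctPartitionCount (d * 0) := by
      have hz : d * 0 = 0 := by omega
      rw [hz, distinctPartitionCount]
      apply Finset.card_pos.mpr
      refine ⟨⟨0, fun {i} hi => absurd hi (Multiset.notMem_zero i), rfl⟩, ?_⟩
      simp only [Nat.Partition.distincts, Finset.mem_filter]
      exact ⟨Finset.mem_univ _, Multiset.nodup_zero⟩
    rw [hhsw, Finset.sum_range_one, hb0, hr0]
    omega
  · -- the main case n ≥ 1
    -- translations from the group
    have hTex : ∀ u z : V, ∃ γ : G ≃g G, γ ∈ Γ ∧ γ u = z := by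
      intro u z
      obtain ⟨γ, h1, h2⟩ := htrans u z
      exact ⟨γ, h1, h2⟩
    choose γf hγmem hγeq using hTex
    set T : V → V → V → V := fun u z x => γf u z x with hTdef
    have hT0 : ∀ u z, T u z u = z := fun u z => hγeq u z
    have hTadj : ∀ u z x y, G.Adj x y → G.Adj (T u z x) (T u z y) := by
      intro u z x y hxy
      exact (γf u z).map_adj_iff.mpr hxy
    have hTinj : ∀ u z, Function.Injective (T u z) := fun u z => (γf u z).injective
    have hgT : ∀ u z x y, h (T u z x) - h (T u z y) = h x - h y := by
      intro u z x y
      exact hghf.2.1 (γf u z) (hγmem u z) y x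
    -- finiteness
    have hwfin : ∀ m : ℕ, {w : ℕ → V | IsWalkFrom G m v w}.Finite :=
      fun m => HW.walk_finite hlf m v
    haveI hFB : ∀ m : ℕ, Finite {ω : ℕ → V // IsBridgeFrom G h m v ω} := by
      intro m
      haveI := (hwfin m).to_subtype
      refine Finite.of_injective
        (fun x => (⟨x.1, x.2.1.1⟩ : {w : ℕ → V | IsWalkFrom G m v w})) ?_
      intro a b hab
      have h2 := congrArg Subtype.val hab
      exact Subtype.ext h2
    haveI hFR : ∀ m : ℕ, Finite {ω : ℕ → V // IsRBridgeFrom G h m v ω} := by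
      intro m
      haveI := (hwfin m).to_subtype
      refine Finite.of_injective
        (fun x => (⟨x.1, x.2.1.1⟩ : {w : ℕ → V | IsWalkFrom G m v w})) ?_
      intro a b hab
      have h2 := congrArg Subtype.val hab
      exact Subtype.ext h2
    haveI hFH : Finite {w : ℕ → V // IsHSWFrom G h n v w} := by
      haveI := (hwfin n).to_subtype
      refine Finite.of_injective
        (fun x => (⟨x.1, x.2.1.1⟩ : {w : ℕ → V | IsWalkFrom G n v w})) ?_
      intro a b hab
      have h2 := congrArg Subtype.val hab
      exact Subtype.ext h2
    -- per-walk decomposition data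
    have hGlue : ∀ x : {w : ℕ → V // IsHSWFrom G h n v w},
        HW.Glue n x.1 (HW.decompL h n x.1) := fun x => (HW.decompSpec n h v x.1 x.2).1
    have hAlt : ∀ x : {w : ℕ → V // IsHSWFrom G h n v w},
        HW.AltBridge G h (HW.decompL h n x.1) := fun x => (HW.decompSpec n h v x.1 x.2).2.1
    have hChain : ∀ x : {w : ℕ → V // IsHSWFrom G h n v w},
        List.Chain' (fun a b => b < a) (HW.spansL h (HW.decompL h n x.1)) :=
      fun x => (HW.decompSpec n h v x.1 x.2).2.2.1
    have hPos : ∀ x : {w : ℕ → V // IsHSWFrom G h n v w},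
        ∀ z ∈ HW.spansL h (HW.decompL h n x.1), 1 ≤ z :=
      fun x => (HW.decompSpec n h v x.1 x.2).2.2.2.1
    have haNne : ∀ x : {w : ℕ → V // IsHSWFrom G h n v w},
        (HW.spansL h (HW.decompL h n x.1)).map Int.toNat ≠ [] := by
      intro x hmap
      exact HW.spansL_ne_nil (HW.decompL_ne_nil h n x.1 hn) (List.map_eq_nil_iff.mp hmap)
    have hsum_le : ∀ x : {w : ℕ → V // IsHSWFrom G h n v w},
        ((HW.spansL h (HW.decompL h n x.1)).map Int.toNat).sum ≤ d * n := by
      intro x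
      have h1 := HW.spans_sum_le (HW.decompL h n x.1) h hLip n v x.1 (hGlue x) x.2.1.1
      have h2 := HW.toNat_sum_list (HW.spansL h (HW.decompL h n x.1))
        (fun z hz => by have := hPos x z hz; omega)
      have h3 : (((HW.spansL h (HW.decompL h n x.1)).map Int.toNat).sum : ℤ) ≤
          ((d * n : ℕ) : ℤ) := by
        rw [h2]
        push_cast
        exact h1
      exact_mod_cast h3
    have hchainN : ∀ x : {w : ℕ → V // IsHSWFrom G h n v w},
        List.Chain' (fun a b : ℕ => b < a)
          ((HW.spansL h (HW.decompL h n x.1)).map Int.toNat) :=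
      fun x => HW.chain_toNat _ (hPos x) (hChain x)
    have hposN : ∀ x : {w : ℕ → V // IsHSWFrom G h n v w},
        ∀ y ∈ (HW.spansL h (HW.decompL h n x.1)).map Int.toNat, 1 ≤ y :=
      fun x => HW.pos_toNat (hPos x)
    -- partitions
    have hppos : ∀ x : {w : ℕ → V // IsHSWFrom G h n v w}, ∀ {i : ℕ},
        i ∈ ((HW.packL (d * n) ((HW.spansL h (HW.decompL h n x.1)).map Int.toNat) : List ℕ) :
          Multiset ℕ) → 0 < i :=
      fun x {i} hi => HW.packL_pos (haNne x) (hposN x) i (Multiset.mem_coe.mp hi)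
    have hpsum : ∀ x : {w : ℕ → V // IsHSWFrom G h n v w},
        ((HW.packL (d * n) ((HW.spansL h (HW.decompL h n x.1)).map Int.toNat) : List ℕ) :
          Multiset ℕ).sum = d * n :=
      fun x => by
        rw [Multiset.sum_coe]
        exact HW.packL_sum (haNne x) (hsum_le x)
    have hpdist : ∀ x : {w : ℕ → V // IsHSWFrom G h n v w},
        (⟨_, fun {i} hi => hppos x hi, hpsum x⟩ : Nat.Partition (d * n)) ∈
          Nat.Partition.distincts (d * n) := by
      intro x
      simp only [Nat.Partition.distincts, Finset.mem_filter]
      refine ⟨Finset.mem_univ _, ?_⟩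
      rw [Multiset.coe_nodup]
      exact (HW.packL_pairwise (haNne x) (hchainN x)).imp (fun hab => by omega)
    -- the stacked bridges
    have hspec2 : ∀ x : {w : ℕ → V // IsHSWFrom G h n v w},
        IsBridgeFrom G h ((HW.lens (HW.decompL h n x.1)).1) v
            (HW.stack2 T v v (HW.decompL h n x.1)).1 ∧
          IsBridgeFrom G (-h) ((HW.lens (HW.decompL h n x.1)).2) v
            (HW.stack2 T v v (HW.decompL h n x.1)).2 ∧
          h ((HW.stack2 T v v (HW.decompL h n x.1)).1 ((HW.lens (HW.decompL h n x.1)).1)) -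
              h v = (HW.spans2 h (HW.decompL h n x.1)).1 ∧
          h v - h ((HW.stack2 T v v (HW.decompL h n x.1)).2
              ((HW.lens (HW.decompL h n x.1)).2)) = (HW.spans2 h (HW.decompL h n x.1)).2 :=
      fun x => HW.stack2_spec T hT0 hTadj hTinj (HW.decompL h n x.1) h hgT v v (hAlt x)
    have hlens : ∀ x : {w : ℕ → V // IsHSWFrom G h n v w},
        (HW.lens (HW.decompL h n x.1)).1 + (HW.lens (HW.decompL h n x.1)).2 = n :=
      fun x => HW.glue_lens _ n x.1 (hGlue x)
    have hRbr : ∀ x : {w : ℕ → V // IsHSWFrom G h n v w},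
        IsRBridgeFrom G h (n - (HW.lens (HW.decompL h n x.1)).1) v
          (HW.stack2 T v v (HW.decompL h n x.1)).2 := by
      intro x
      have h1 := (hspec2 x).2.1
      have h2 : (HW.lens (HW.decompL h n x.1)).2 = n - (HW.lens (HW.decompL h n x.1)).1 := by
        have := hlens x
        omega
      rw [h2] at h1
      exact HW.rbridge_iff.mpr h1
    -- the injection
    set Φ : {w : ℕ → V // IsHSWFrom G h n v w} →
        (↥(Nat.Partition.distincts (d * n))) ×
          (Σ m : Fin (n + 1), ({ω : ℕ → V // IsBridgeFrom G h (m : ℕ) v ω} ×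
            {ω : ℕ → V // IsRBridgeFrom G h (n - (m : ℕ)) v ω})) :=
      fun x =>
        (⟨⟨_, fun {i} hi => hppos x hi, hpsum x⟩, hpdist x⟩,
         ⟨⟨(HW.lens (HW.decompL h n x.1)).1, by have := hlens x; omega⟩,
          (⟨(HW.stack2 T v v (HW.decompL h n x.1)).1, (hspec2 x).1⟩,
           ⟨(HW.stack2 T v v (HW.decompL h n x.1)).2, hRbr x⟩)⟩) with hΦdef
    have hΦinj : Function.Injective Φ := by
      intro x y hxy
      rw [hΦdef] at hxy
      have hpart : (⟨_, fun {i} hi => hppos x hi, hpsum x⟩ : Nat.Partition (d * n)) =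
          ⟨_, fun {i} hi => hppos y hi, hpsum y⟩ :=
        congrArg (fun t => (Prod.fst t).1) hxy
      have hsig := congrArg Prod.snd hxy
      obtain ⟨h1, h2⟩ := Sigma.mk.inj_iff.mp hsig
      have hmeq : (HW.lens (HW.decompL h n x.1)).1 = (HW.lens (HW.decompL h n y.1)).1 :=
        congrArg Fin.val h1
      have hex := HW.heq_extract (Q := fun m ω => IsBridgeFrom G h m v ω)
        (R := fun m ω => IsRBridgeFrom G h (n - m) v ω) (congrArg Fin.val h1) h2
      have hB : (HW.stack2 T v v (HW.decompL h n x.1)).1 =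
          (HW.stack2 T v v (HW.decompL h n y.1)).1 := hex.1
      have hBb : (HW.stack2 T v v (HW.decompL h n x.1)).2 =
          (HW.stack2 T v v (HW.decompL h n y.1)).2 := hex.2
      -- total spans agree
      have hsumZ : (HW.spansL h (HW.decompL h n x.1)).sum =
          (HW.spansL h (HW.decompL h n y.1)).sum := by
        have e1 := HW.spans2_sum (HW.decompL h n x.1) h
        have e2 := HW.spans2_sum (HW.decompL h n y.1) h
        have f1 := (hspec2 x).2.2.1
        have f2 := (hspec2 x).2.2.2
        have g1 := (hspec2 y).2.2.1
        have g2 := (hspec2 y).2.2.2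
        rw [hB, hmeq] at f1
        have hl2 : (HW.lens (HW.decompL h n x.1)).2 = (HW.lens (HW.decompL h n y.1)).2 := by
          have := hlens x
          have := hlens y
          omega
        rw [hBb, hl2] at f2
        omega
      have hsumN : ((HW.spansL h (HW.decompL h n x.1)).map Int.toNat).sum =
          ((HW.spansL h (HW.decompL h n y.1)).map Int.toNat).sum := by
        have c1 := HW.toNat_sum_list (HW.spansL h (HW.decompL h n x.1))
          (fun z hz => by have := hPos x z hz; omega)
        have c2 := HW.toNat_sum_list (HW.spansL h (HW.decompL h n y.1))
          (fun z hz => by have := hPos y z hz; omega)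
        have : (((HW.spansL h (HW.decompL h n x.1)).map Int.toNat).sum : ℤ) =
            (((HW.spansL h (HW.decompL h n y.1)).map Int.toNat).sum : ℤ) := by
          rw [c1, c2, hsumZ]
        exact_mod_cast this
      have hperm : List.Perm
          (HW.packL (d * n) ((HW.spansL h (HW.decompL h n x.1)).map Int.toNat))
          (HW.packL (d * n) ((HW.spansL h (HW.decompL h n y.1)).map Int.toNat)) := by
        have hparts := congrArg Nat.Partition.parts hpart
        exact Multiset.coe_eq_coe.mp hparts
      have haN : (HW.spansL h (HW.decompL h n x.1)).map Int.toNat =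
          (HW.spansL h (HW.decompL h n y.1)).map Int.toNat :=
        HW.packL_inj (haNne x) (haNne y) (hchainN x) (hchainN y) hsumN hperm
      have haZ : HW.spansL h (HW.decompL h n x.1) = HW.spansL h (HW.decompL h n y.1) := by
        have r1 := HW.toNat_cast_list (HW.spansL h (HW.decompL h n x.1))
          (fun z hz => by have := hPos x z hz; omega)
        have r2 := HW.toNat_cast_list (HW.spansL h (HW.decompL h n y.1))
          (fun z hz => by have := hPos y z hz; omega)
        rw [← r1, ← r2, haN]
      have hstart : x.1 0 = y.1 0 := by
        rw [x.2.1.1.1, y.2.1.1.1]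
      have hLeq : HW.decompL h n x.1 = HW.decompL h n y.1 :=
        HW.stack2_inj T hT0 hTadj hTinj (HW.decompL h n x.1) (HW.decompL h n y.1) h hgT
          n x.1 y.1 v v (hGlue x) (hGlue y) hstart (hAlt x) (hAlt y) haZ hmeq
          (Prod.ext hB hBb)
      have hGy' : HW.Glue n y.1 (HW.decompL h n x.1) := by
        rw [hLeq]
        exact hGlue y
      have hdet := HW.glue_det (HW.decompL h n x.1) n x.1 y.1 (hGlue x) hGy' hstart
      apply Subtype.ext
      funext i
      rcases le_or_gt i n with hi | hi
      · exact hdet i hi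
      · rw [x.2.1.1.2.2 i hi.le, y.2.1.1.2.2 i hi.le]
        exact hdet n le_rfl
    -- counting
    have hle := Nat.card_le_card_of_injective Φ hΦinj
    have hcard : Nat.card ((↥(Nat.Partition.distincts (d * n))) ×
        (Σ m : Fin (n + 1), ({ω : ℕ → V // IsBridgeFrom G h (m : ℕ) v ω} ×
          {ω : ℕ → V // IsRBridgeFrom G h (n - (m : ℕ)) v ω}))) =
        distinctPartitionCount (d * n) *
          ∑ m ∈ Finset.range (n + 1), bridgeCount G h m v * rbridgeCount G h (n - m) v := by
      haveI hft : ∀ m : Fin (n + 1), Fintype ({ω : ℕ → V // IsBridgeFrom G h (m : ℕ) v ω} ×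
          {ω : ℕ → V // IsRBridgeFrom G h (n - (m : ℕ)) v ω}) := fun m => Fintype.ofFinite _
      rw [Nat.card_prod]
      congr 1
      · rw [Nat.card_eq_finsetCard]
        rfl
      · rw [Nat.card_eq_fintype_card, Fintype.card_sigma,
          ← Fin.sum_univ_eq_sum_range
            (fun m => bridgeCount G h m v * rbridgeCount G h (n - m) v) (n + 1)]
        apply Finset.sum_congr rfl
        intro m _
        rw [← Nat.card_eq_fintype_card, Nat.card_prod]
        rfl
    calc hswCount G h n v = Nat.card {w : ℕ → V // IsHSWFrom G h n v w} := rfl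
      _ ≤ _ := hle
      _ = _ := hcard
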